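/- arXiv:2103.08276 — 3 statements merged into one kernel-verified Lean document; each statement's English description precedes it below -/
import Mathlib

section
/- Let R and S be rings with local units and let P be a unitary R-S-bimodule. Then the following are equivalent: (a) P is a generator in RMod; (b) for each unitary left R-module M, sTr(P,M) = M; (c) for each unitary left R-module M, the canonical R-module homomorphism ⊕_{SHom_R(P,M)} P → M, (x_α)_α ↦ Σ_α (x_α)α, is an epimorphism; (d) for each unitary left R-module M there exist an index set I and an R-module epimorphism ⊕_I P → M. -/
set_option linter.unusedVariables false

/-! ### Core: non-unital rings with local units, modules, homomorphisms, categories -/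

universe u v w

open MulOpposite CategoryTheory

/-- A ring with local units: every finite subset is contained in a subring
of the form `eRe` for an idempotent `e`; equivalently, every finite subset
admits an idempotent acting as a two-sided identity on it. -/
class HasLocalUnits (R : Type u) [NonUnitalRing R] : Prop where
  exists_unit : ∀ s : Finset R, ∃ e : R, e * e = e ∧ ∀ x ∈ s, e * x = x ∧ x * e = x

/-- A (left) module over a non-unital ring. -/
class LMod (R : Type u) [NonUnitalRing R] (M : Type v) [AddCommGroup M] extends SMul R M where
  smul_add' : ∀ (r : R) (m n : M), r • (m + n) = r • m + r • n
  add_smul' : ∀ (r s : R) (m : M), (r + s) • m = r • m + s • m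
  mul_smul' : ∀ (r s : R) (m : M), (r * s) • m = r • (s • m)

section basic
variable {R : Type u} [NonUnitalRing R] {M : Type v} [AddCommGroup M] [LMod R M]

theorem LMod.smul_zero' (r : R) : r • (0 : M) = 0 := by
  have h := LMod.smul_add' r (0 : M) 0
  rw [add_zero] at h
  have h2 : r • (0 : M) + r • (0 : M) = r • (0 : M) + 0 := by rw [← h, add_zero]
  exact add_left_cancel h2

theorem LMod.zero_smul' (m : M) : (0 : R) • m = 0 := by
  have h := LMod.add_smul' (0 : R) 0 m
  rw [add_zero] at h
  have h2 : (0 : R) • m + (0 : R) • m = (0 : R) • m + 0 := by rw [← h, add_zero]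
  exact add_left_cancel h2

theorem LMod.smul_neg' (r : R) (m : M) : r • (-m) = -(r • m) := by
  have h : r • m + r • (-m) = 0 := by
    rw [← LMod.smul_add' r m (-m), add_neg_cancel, LMod.smul_zero']
  exact eq_neg_of_add_eq_zero_right h

end basic

/-- `f : M → N` is a homomorphism of (non-unital) `R`-modules. -/
structure IsLHom (R : Type u) [NonUnitalRing R] {M : Type v} {N : Type w}
    [AddCommGroup M] [AddCommGroup N] [LMod R M] [LMod R N] (f : M → N) : Prop where
  map_add : ∀ x y, f (x + y) = f x + f y
  map_smul : ∀ (r : R) (x : M), f (r • x) = r • f x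

theorem IsLHom.map_zero {R : Type u} [NonUnitalRing R] {M : Type v} {N : Type w}
    [AddCommGroup M] [AddCommGroup N] [LMod R M] [LMod R N] {f : M → N}
    (hf : IsLHom R f) : f 0 = 0 := by
  have h := hf.map_add 0 0
  rw [add_zero] at h
  have h2 : f 0 + f 0 = f 0 + 0 := by rw [← h, add_zero]
  exact add_left_cancel h2

theorem IsLHom.map_neg {R : Type u} [NonUnitalRing R] {M : Type v} {N : Type w}
    [AddCommGroup M] [AddCommGroup N] [LMod R M] [LMod R N] {f : M → N}
    (hf : IsLHom R f) (x : M) : f (-x) = -(f x) := by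
  have h : f x + f (-x) = 0 := by rw [← hf.map_add, add_neg_cancel, hf.map_zero]
  exact eq_neg_of_add_eq_zero_right h

/-- The type of homomorphisms of (non-unital) `R`-modules. -/
def LinMap (R : Type u) [NonUnitalRing R] (M : Type v) (N : Type w)
    [AddCommGroup M] [AddCommGroup N] [LMod R M] [LMod R N] : Type (max v w) :=
  {f : M → N // IsLHom R f}

namespace LinMap

variable {R : Type u} [NonUnitalRing R] {M : Type v} {N : Type w}
    [AddCommGroup M] [AddCommGroup N] [LMod R M] [LMod R N]

theorem ext {f g : LinMap R M N} (h : f.1 = g.1) : f = g := Subtype.ext h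

instance : Add (LinMap R M N) :=
  ⟨fun f g => ⟨fun x => f.1 x + g.1 x,
    ⟨fun x y => by rw [f.2.map_add, g.2.map_add]; abel,
     fun r x => by rw [f.2.map_smul, g.2.map_smul, LMod.smul_add']⟩⟩⟩

instance : Zero (LinMap R M N) :=
  ⟨⟨fun _ => 0, ⟨fun _ _ => by rw [add_zero], fun r _ => (LMod.smul_zero' r).symm⟩⟩⟩

instance : Neg (LinMap R M N) :=
  ⟨fun f => ⟨fun x => -(f.1 x),
    ⟨fun x y => by rw [f.2.map_add]; abel,
     fun r x => by rw [f.2.map_smul, LMod.smul_neg']⟩⟩⟩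

instance : AddCommGroup (LinMap R M N) where
  add_assoc f g h := ext (funext fun x => add_assoc _ _ _)
  zero_add f := ext (funext fun x => zero_add _)
  add_zero f := ext (funext fun x => add_zero _)
  add_comm f g := ext (funext fun x => add_comm _ _)
  neg_add_cancel f := ext (funext fun x => neg_add_cancel _)
  nsmul := nsmulRec
  zsmul := zsmulRec

@[simp] theorem add_apply (f g : LinMap R M N) (x : M) : (f + g).1 x = f.1 x + g.1 x := rfl
@[simp] theorem zero_apply (x : M) : (0 : LinMap R M N).1 x = 0 := rfl
@[simp] theorem neg_apply (f : LinMap R M N) (x : M) : (-f).1 x = -(f.1 x) := rfl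

end LinMap

/-- The endomorphism ring of a module over a non-unital ring, with the
"diagrammatic" multiplication `(f * g) x = g (f x)` (i.e. `f * g` means
"first `f`, then `g`", matching homomorphisms written on the right). -/
instance LinMap.instNonUnitalRing {R : Type u} [NonUnitalRing R] {M : Type v}
    [AddCommGroup M] [LMod R M] : NonUnitalRing (LinMap R M M) :=
  { (inferInstance : AddCommGroup (LinMap R M M)) with
    mul := fun f g => ⟨fun x => g.1 (f.1 x),
      ⟨fun x y => by rw [f.2.map_add, g.2.map_add], fun r x => by rw [f.2.map_smul, g.2.map_smul]⟩⟩
    left_distrib := fun f g h => LinMap.ext (funext fun x => rfl)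
    right_distrib := fun f g h => LinMap.ext (funext fun x => h.2.map_add _ _)
    zero_mul := fun f => LinMap.ext (funext fun x => f.2.map_zero)
    mul_zero := fun f => LinMap.ext (funext fun x => rfl)
    mul_assoc := fun f g h => LinMap.ext (funext fun x => rfl) }

@[simp] theorem LinMap.mul_apply {R : Type u} [NonUnitalRing R] {M : Type v}
    [AddCommGroup M] [LMod R M] (f g : LinMap R M M) (x : M) : (f * g).1 x = g.1 (f.1 x) := rfl

/-- A module `M` over a non-unital ring `R` is unitary if `RM = M`. -/
def IsUnitary (R : Type u) [NonUnitalRing R] (M : Type v) [AddCommGroup M] [LMod R M] : Prop :=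
  ∀ m : M, m ∈ AddSubgroup.closure {x : M | ∃ (r : R) (n : M), x = r • n}

/-- The `R`-submodule (as an additive subgroup) generated by a subset. -/
def lspan (R : Type u) [NonUnitalRing R] {M : Type v} [AddCommGroup M] [LMod R M]
    (X : Set M) : AddSubgroup M :=
  AddSubgroup.closure (X ∪ {m | ∃ (r : R) (x : M), x ∈ X ∧ m = r • x})

/-- A subset `A` of a module is finitely generated (as an `R`-submodule). -/
def IsFGSet (R : Type u) [NonUnitalRing R] {M : Type v} [AddCommGroup M] [LMod R M]
    (A : Set M) : Prop :=
  ∃ s : Finset M, (↑s : Set M) ⊆ A ∧ ∀ a ∈ A, a ∈ lspan R (↑s : Set M)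

/-- A finitely generated module over a non-unital ring. -/
def IsFG (R : Type u) [NonUnitalRing R] (M : Type v) [AddCommGroup M] [LMod R M] : Prop :=
  ∃ s : Finset M, ∀ m : M, m ∈ lspan R (↑s : Set M)

/-- The category of unitary left modules over a ring with local units
(objects: unitary left `R`-modules). -/
structure UMod (R : Type u) [NonUnitalRing R] : Type (max u (v + 1)) where
  carrier : Type v
  [grp : AddCommGroup carrier]
  [mod : LMod R carrier]
  unitary : IsUnitary R carrier

attribute [instance] UMod.grp UMod.mod

instance {R : Type u} [NonUnitalRing R] : CoeSort (UMod.{u, v} R) (Type v) := ⟨UMod.carrier⟩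

instance UMod.instCategory {R : Type u} [NonUnitalRing R] : Category (UMod.{u, v} R) where
  Hom M N := LinMap R M.carrier N.carrier
  id M := ⟨fun x => x, ⟨fun _ _ => rfl, fun _ _ => rfl⟩⟩
  comp f g := ⟨fun x => g.1 (f.1 x),
    ⟨fun x y => by rw [f.2.map_add, g.2.map_add], fun r x => by rw [f.2.map_smul, g.2.map_smul]⟩⟩
  id_comp f := LinMap.ext rfl
  comp_id f := LinMap.ext rfl
  assoc f g h := LinMap.ext rfl

@[simp] theorem UMod.comp_apply {R : Type u} [NonUnitalRing R] {M N K : UMod.{u, v} R}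
    (f : M ⟶ N) (g : N ⟶ K) (x : M.carrier) : (f ≫ g).1 x = g.1 (f.1 x) := rfl

@[simp] theorem UMod.id_apply {R : Type u} [NonUnitalRing R] {M : UMod.{u, v} R}
    (x : M.carrier) : (𝟙 M : M ⟶ M).1 x = x := rfl

instance UMod.instPreadditive {R : Type u} [NonUnitalRing R] :
    Preadditive (UMod.{u, v} R) where
  homGroup M N := inferInstanceAs (AddCommGroup (LinMap R M.carrier N.carrier))
  add_comp M N K f f' g := LinMap.ext (funext fun x => g.2.map_add _ _)
  comp_add M N K f g g' := LinMap.ext (funext fun x => rfl)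

/-- A unitary module `P` is a generator of the category of unitary left `R`-modules. -/
def IsGenerator (R : Type u) [NonUnitalRing R] (P : UMod.{u, v} R) : Prop :=
  ∀ (M B : UMod.{u, v} R) (f g : M ⟶ B), f ≠ g → ∃ h : P ⟶ M, h ≫ f ≠ h ≫ g

/-- A set of unitary modules is a cogenerating set for the category of
unitary left `R`-modules. -/
def IsCogenSet (R : Type u) [NonUnitalRing R] (𝒰 : Set (UMod.{u, v} R)) : Prop :=
  ∀ (B M : UMod.{u, v} R) (f g : B ⟶ M), f ≠ g → ∃ U' ∈ 𝒰, ∃ h : M ⟶ U', f ≫ h ≠ g ≫ h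
/-! ### The largest unitary submodule `C·H` of a module `H`, and induced
module structures on hom-groups -/

section umax

variable (C : Type u) [NonUnitalRing C] (H : Type v) [AddCommGroup H] [LMod C H]

/-- `C·H`, the largest unitary `C`-submodule of the `C`-module `H`. -/
def umax : AddSubgroup H :=
  AddSubgroup.closure {h : H | ∃ (c : C) (h' : H), h = c • h'}

variable {C H}

theorem smul_mem_umax (c : C) (h : H) : c • h ∈ umax C H :=
  AddSubgroup.subset_closure ⟨c, h, rfl⟩

/-- An additive, `C`-equivariant map carries `C·H` into `C·H'`. -/
theorem umax_mapsTo {H' : Type w} [AddCommGroup H'] [LMod C H'] (T : H → H')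
    (hadd : ∀ x y, T (x + y) = T x + T y) (hsmul : ∀ (c : C) (x : H), T (c • x) = c • T x)
    {h : H} (hh : h ∈ umax C H) : T h ∈ umax C H' := by
  have hT : IsLHom C T := ⟨hadd, hsmul⟩
  induction hh using AddSubgroup.closure_induction with
  | mem x hx =>
    obtain ⟨c, h', rfl⟩ := hx
    rw [hsmul]; exact smul_mem_umax c (T h')
  | zero => rw [hT.map_zero]; exact (umax C H').zero_mem
  | add x y hx hy ihx ihy => rw [hadd]; exact (umax C H').add_mem ihx ihy
  | neg x hx ihx => rw [hT.map_neg]; exact (umax C H').neg_mem ihx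

instance umax.instLMod : LMod C ↥(umax C H) where
  smul c h := ⟨c • h.1, smul_mem_umax c h.1⟩
  smul_add' c m n := Subtype.ext (LMod.smul_add' c m.1 n.1)
  add_smul' c c' m := Subtype.ext (LMod.add_smul' c c' m.1)
  mul_smul' c c' m := Subtype.ext (LMod.mul_smul' c c' m.1)

@[simp] theorem umax.smul_coe (c : C) (h : ↥(umax C H)) : (c • h).1 = c • h.1 := rfl

/-- If a second ring `D` acts on `H` commuting with the `C`-action,
then `C·H` is stable under the `D`-action. -/
theorem umax_stable {D : Type w} [NonUnitalRing D] [LMod D H] [SMulCommClass C D H]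
    (d : D) {h : H} (hh : h ∈ umax C H) : d • h ∈ umax C H :=
  umax_mapsTo (fun x => d • x) (fun x y => LMod.smul_add' d x y)
    (fun c x => (smul_comm c d x).symm) hh

instance umax.instLMod₂ {D : Type w} [NonUnitalRing D] [LMod D H] [SMulCommClass C D H] :
    LMod D ↥(umax C H) where
  smul d h := ⟨d • h.1, umax_stable d h.2⟩
  smul_add' d m n := Subtype.ext (LMod.smul_add' d m.1 n.1)
  add_smul' d d' m := Subtype.ext (LMod.add_smul' d d' m.1)
  mul_smul' d d' m := Subtype.ext (LMod.mul_smul' d d' m.1)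

instance umax.instSMulCommClass {D : Type w} [NonUnitalRing D] [LMod D H]
    [SMulCommClass C D H] : SMulCommClass C D ↥(umax C H) :=
  ⟨fun c d h => Subtype.ext (smul_comm c d h.1)⟩

/-- If `C` has local units, then `C·H` is a unitary `C`-module. -/
theorem umax_unitary [HasLocalUnits C] : IsUnitary C ↥(umax C H) := by
  intro m
  obtain ⟨h, hh⟩ := m
  induction hh using AddSubgroup.closure_induction with
  | mem x hx =>
    obtain ⟨c, h', rfl⟩ := hx
    obtain ⟨e, he, hec⟩ := HasLocalUnits.exists_unit {c}
    have hc := (hec c (Finset.mem_singleton_self c)).1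
    refine AddSubgroup.subset_closure ⟨e, ⟨c • h', smul_mem_umax c h'⟩, ?_⟩
    refine Subtype.ext ?_
    show c • h' = e • (c • h')
    rw [← LMod.mul_smul', hc]
  | zero =>
    have : (⟨(0 : H), (umax C H).zero_mem⟩ : ↥(umax C H)) = 0 := rfl
    rw [this]; exact AddSubgroup.zero_mem _
  | add x y hx hy ihx ihy =>
    have : (⟨x + y, (umax C H).add_mem hx hy⟩ : ↥(umax C H)) =
        ⟨x, hx⟩ + ⟨y, hy⟩ := rfl
    rw [this]; exact AddSubgroup.add_mem _ ihx ihy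
  | neg x hx ihx =>
    have : (⟨-x, (umax C H).neg_mem hx⟩ : ↥(umax C H)) = -⟨x, hx⟩ := rfl
    rw [this]; exact AddSubgroup.neg_mem _ ihx

end umax

section regular

variable (R : Type u) [NonUnitalRing R]

/-- The left regular module structure of a non-unital ring on itself. -/
instance NonUnitalRing.instLModSelf : LMod R R where
  smul := (· * ·)
  smul_add' := mul_add
  add_smul' := add_mul
  mul_smul' := mul_assoc

@[simp] theorem NonUnitalRing.smul_def (r s : R) : r • s = r * s := rfl

/-- The right regular module structure, as a left module over the opposite ring. -/
instance NonUnitalRing.instLModSelfOp : LMod Rᵐᵒᵖ R where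
  smul r s := s * r.unop
  smul_add' r m n := add_mul m n r.unop
  add_smul' r r' m := mul_add m r.unop r'.unop
  mul_smul' r r' m := (mul_assoc m r'.unop r.unop).symm

@[simp] theorem NonUnitalRing.op_smul_def (r : Rᵐᵒᵖ) (s : R) : r • s = s * r.unop := rfl

instance : SMulCommClass R Rᵐᵒᵖ R :=
  ⟨fun r s x => by
    show r * (x * s.unop) = (r * x) * s.unop
    rw [mul_assoc]⟩

/-- Local units pass to the opposite ring. -/
instance instHasLocalUnitsOp [HasLocalUnits R] : HasLocalUnits Rᵐᵒᵖ where
  exists_unit s := by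
    classical
    obtain ⟨e, he, h⟩ := HasLocalUnits.exists_unit (R := R) (s.image MulOpposite.unop)
    refine ⟨MulOpposite.op e, by rw [← MulOpposite.op_mul, he], fun x hx => ?_⟩
    have hx' := h x.unop (Finset.mem_image_of_mem MulOpposite.unop hx)
    constructor
    · conv_lhs => rw [← MulOpposite.op_unop x, ← MulOpposite.op_mul, hx'.2, MulOpposite.op_unop]
    · conv_lhs => rw [← MulOpposite.op_unop x, ← MulOpposite.op_mul, hx'.1, MulOpposite.op_unop]

end regular

section homact

variable {A B C : Type u} [NonUnitalRing A] [NonUnitalRing B] [NonUnitalRing C]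
variable {X : Type v} {Y : Type w} [AddCommGroup X] [AddCommGroup Y] [LMod B X] [LMod B Y]

/-- The action of `A` on `Hom_B(X, Y)` by precomposition with the right
`A`-action on `X` (homomorphisms written on the right: `(a • f) x = f (x·a)`). -/
instance LinMap.instLModPre [LMod Aᵐᵒᵖ X] [SMulCommClass B Aᵐᵒᵖ X] :
    LMod A (LinMap B X Y) where
  smul a f := ⟨fun x => f.1 (op a • x),
    ⟨fun x y => by rw [LMod.smul_add', f.2.map_add],
     fun r x => by rw [← smul_comm r (op a) x, f.2.map_smul]⟩⟩
  smul_add' a f g := LinMap.ext rfl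
  add_smul' a a' f := LinMap.ext (funext fun x => by
    show f.1 (op (a + a') • x) = f.1 (op a • x) + f.1 (op a' • x)
    rw [← f.2.map_add, ← LMod.add_smul']
    rfl)
  mul_smul' a a' f := LinMap.ext (funext fun x => by
    show f.1 (op (a * a') • x) = f.1 (op a' • (op a • x))
    rw [← LMod.mul_smul']
    rfl)

theorem LinMap.pre_smul_apply [LMod Aᵐᵒᵖ X] [SMulCommClass B Aᵐᵒᵖ X]
    (a : A) (f : LinMap B X Y) (x : X) : (a • f).1 x = f.1 (op a • x) := rfl

/-- The action of `C` on `Hom_B(X, Y)` by postcomposition with a commuting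
`C`-action on `Y`. -/
instance LinMap.instLModPost [LMod C Y] [SMulCommClass B C Y] :
    LMod C (LinMap B X Y) where
  smul c f := ⟨fun x => c • f.1 x,
    ⟨fun x y => by rw [f.2.map_add, LMod.smul_add'],
     fun r x => by rw [f.2.map_smul]; exact (smul_comm r c (f.1 x)).symm⟩⟩
  smul_add' c f g := LinMap.ext (funext fun x => LMod.smul_add' c (f.1 x) (g.1 x))
  add_smul' c c' f := LinMap.ext (funext fun x => LMod.add_smul' c c' (f.1 x))
  mul_smul' c c' f := LinMap.ext (funext fun x => LMod.mul_smul' c c' (f.1 x))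

theorem LinMap.post_smul_apply [LMod C Y] [SMulCommClass B C Y]
    (c : C) (f : LinMap B X Y) (x : X) : (c • f).1 x = c • (f.1 x) := rfl

/-- Pre- and postcomposition actions on hom-groups commute. -/
instance LinMap.instSMulCommClassPrePost [LMod Aᵐᵒᵖ X] [SMulCommClass B Aᵐᵒᵖ X]
    [LMod C Y] [SMulCommClass B C Y] : SMulCommClass A C (LinMap B X Y) :=
  ⟨fun a c f => LinMap.ext rfl⟩

end homact
/-! ### Split direct systems and direct limits of unitary modules -/

section dirsys

variable (R : Type u) [NonUnitalRing R]

/-- A split direct system of unitary left `R`-modules, indexed by a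
quasi-ordered set `(ι, rel)`: a direct system `(P_i, φ_{ij})` together with
splittings `ψ_{ji} : P_j → P_i` (for `i ≤ j`) such that `φ_{ij} ψ_{ji} = id`
and `ψ_{kj} ψ_{ji} = ψ_{ki}`. -/
structure SplitSystem (ι : Type w) (rel : ι → ι → Prop) : Type (max u w (v + 1)) where
  obj : ι → UMod.{u, v} R
  map : ∀ {i j : ι}, rel i j → (obj i ⟶ obj j)
  split : ∀ {i j : ι}, rel i j → (obj j ⟶ obj i)
  map_self : ∀ {i : ι} (h : rel i i) (x : (obj i).carrier), (map h).1 x = x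
  map_map : ∀ {i j k : ι} (hij : rel i j) (hjk : rel j k) (hik : rel i k)
    (x : (obj i).carrier), (map hjk).1 ((map hij).1 x) = (map hik).1 x
  split_map : ∀ {i j : ι} (h : rel i j) (x : (obj i).carrier),
    (split h).1 ((map h).1 x) = x
  split_split : ∀ {i j k : ι} (hij : rel i j) (hjk : rel j k) (hik : rel i k)
    (x : (obj k).carrier), (split hij).1 ((split hjk).1 x) = (split hik).1 x

/-- `P`, together with homomorphisms `φ_i : P_i → P`, is a direct limit of the
direct system `(P_i, φ_{ij})` (with directed index set): the `φ_i` are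
compatible, every element of `P` comes from some `P_i`, and everything killed
by `φ_i` is eventually killed in the system. -/
structure LimitCocone {ι : Type w} {rel : ι → ι → Prop} (D : SplitSystem.{u, v} R ι rel)
    (P : Type v) [AddCommGroup P] [LMod R P] : Type (max u w v) where
  incl : ∀ i, LinMap R (D.obj i).carrier P
  compat : ∀ {i j : ι} (h : rel i j) (x : (D.obj i).carrier),
    (incl j).1 ((D.map h).1 x) = (incl i).1 x
  exhaustive : ∀ x : P, ∃ (i : ι) (y : (D.obj i).carrier), (incl i).1 y = x
  eventually_zero : ∀ i (y : (D.obj i).carrier), (incl i).1 y = 0 →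
    ∃ j, ∃ h : rel i j, (D.map h).1 y = 0

/-- A unitary left `R`-module is locally projective if it is a direct limit of a
split direct system of finitely generated projective unitary left `R`-modules. -/
def IsLocallyProjective (P : Type v) [AddCommGroup P] [LMod R P] : Prop :=
  ∃ (ι : Type v) (rel : ι → ι → Prop),
    (∀ i, rel i i) ∧ (∀ {i j k}, rel i j → rel j k → rel i k) ∧
    Nonempty ι ∧ (∀ i j, ∃ k, rel i k ∧ rel j k) ∧
    ∃ (D : SplitSystem.{u, v} R ι rel) (_ : LimitCocone R D P),
      ∀ i, IsFG R (D.obj i).carrier ∧ CategoryTheory.Projective (D.obj i)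

variable {R}

/-- The transition maps `Ω_{ij} : End_R(P_i) → End_R(P_j)`, `α ↦ ψ_{ji} α φ_{ij}`,
of the direct system of endomorphism rings associated to a split direct system. -/
def SplitSystem.endTrans {ι : Type w} {rel : ι → ι → Prop}
    (D : SplitSystem.{u, v} R ι rel) {i j : ι} (h : rel i j)
    (a : LinMap R (D.obj i).carrier (D.obj i).carrier) :
    LinMap R (D.obj j).carrier (D.obj j).carrier :=
  ⟨fun x => (D.map h).1 (a.1 ((D.split h).1 x)),
   ⟨fun x y => by rw [(D.split h).2.map_add, a.2.map_add, (D.map h).2.map_add],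
    fun r x => by rw [(D.split h).2.map_smul, a.2.map_smul, (D.map h).2.map_smul]⟩⟩

end dirsys
/-! ### The functor `SHom_R(P,−)` and related constructions for a bimodule `P` -/

section shom

variable (R S : Type u) [NonUnitalRing R] [NonUnitalRing S]
variable (P : Type u) [AddCommGroup P] [LMod R P] [LMod Sᵐᵒᵖ P] [SMulCommClass R Sᵐᵒᵖ P]

/-- `SHom_R(P,M) = S·Hom_R(P,M)`, the largest unitary left `S`-submodule of
`Hom_R(P,M)`, as a type. -/
abbrev SHom (M : Type u) [AddCommGroup M] [LMod R M] : Type u :=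
  ↥(umax S (LinMap R P M))

variable {R S P}

/-- The action of `SHom_R(P,−)` on a homomorphism `g : M → N` (postcomposition). -/
def sHomMap {M N : Type u} [AddCommGroup M] [AddCommGroup N] [LMod R M] [LMod R N]
    (g : LinMap R M N) (α : SHom R S P M) : SHom R S P N :=
  ⟨⟨fun x => g.1 (α.1.1 x),
    ⟨fun x y => by rw [α.1.2.map_add, g.2.map_add],
     fun r x => by rw [α.1.2.map_smul, g.2.map_smul]⟩⟩,
   umax_mapsTo (C := S)
     (fun f => ⟨fun x => g.1 (f.1 x),
       ⟨fun x y => by rw [f.2.map_add, g.2.map_add],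
        fun r x => by rw [f.2.map_smul, g.2.map_smul]⟩⟩)
     (fun f f' => LinMap.ext (funext fun x => g.2.map_add _ _))
     (fun s f => LinMap.ext rfl) α.2⟩

theorem sHomMap_apply {M N : Type u} [AddCommGroup M] [AddCommGroup N] [LMod R M]
    [LMod R N] (g : LinMap R M N) (α : SHom R S P M) (x : P) :
    ((sHomMap g α).1).1 x = g.1 (α.1.1 x) := rfl

theorem sHomMap_add {M N : Type u} [AddCommGroup M] [AddCommGroup N] [LMod R M]
    [LMod R N] (g : LinMap R M N) (α β : SHom R S P M) :
    sHomMap g (α + β) = sHomMap g α + sHomMap g β :=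
  Subtype.ext (LinMap.ext (funext fun x =>
    show g.1 (α.1.1 x + β.1.1 x) = g.1 (α.1.1 x) + g.1 (β.1.1 x) from g.2.map_add _ _))

theorem sHomMap_smul {M N : Type u} [AddCommGroup M] [AddCommGroup N] [LMod R M]
    [LMod R N] (g : LinMap R M N) (s : S) (α : SHom R S P M) :
    sHomMap g (s • α) = s • sHomMap g α :=
  Subtype.ext (LinMap.ext (funext fun x => rfl))

/-- `SHom_R(P,g)` as a homomorphism of `S`-modules. -/
def sHomLin {M N : Type u} [AddCommGroup M] [AddCommGroup N] [LMod R M] [LMod R N]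
    (g : LinMap R M N) : LinMap S (SHom R S P M) (SHom R S P N) :=
  ⟨sHomMap g, ⟨sHomMap_add g, fun s α => sHomMap_smul g s α⟩⟩

variable (R S P)

/-- The functor `SHom_R(P,−)` from unitary left `R`-modules to unitary left
`S`-modules. -/
def sHomF [HasLocalUnits S] : UMod.{u, u} R ⥤ UMod.{u, u} S where
  obj M := ⟨SHom R S P M.carrier, umax_unitary⟩
  map g := sHomLin g
  map_id M := LinMap.ext (funext fun α => Subtype.ext (LinMap.ext (funext fun x => rfl)))
  map_comp f g := LinMap.ext (funext fun α => Subtype.ext (LinMap.ext (funext fun x => rfl)))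

/-- `G_P = SHom_R(P,R)`, an `S`-`R`-bimodule. -/
abbrev GP : Type u := ↥(umax S (LinMap R P R))

/-- `RHom_S(G_P, N) = R·Hom_S(G_P, N)`, as a type. -/
abbrev RHomG (N : Type u) [AddCommGroup N] [LMod S N] : Type u :=
  ↥(umax R (LinMap S (GP R S P) N))

variable {R S P}

/-- The action of `RHom_S(G_P,−)` on a homomorphism of `S`-modules. -/
def rHomGMap {N N' : Type u} [AddCommGroup N] [AddCommGroup N'] [LMod S N] [LMod S N']
    (g : LinMap S N N') (α : RHomG R S P N) : RHomG R S P N' :=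
  ⟨⟨fun β => g.1 (α.1.1 β),
    ⟨fun x y => by rw [α.1.2.map_add, g.2.map_add],
     fun s x => by rw [α.1.2.map_smul, g.2.map_smul]⟩⟩,
   umax_mapsTo (C := R)
     (fun f => ⟨fun β => g.1 (f.1 β),
       ⟨fun x y => by rw [f.2.map_add, g.2.map_add],
        fun s x => by rw [f.2.map_smul, g.2.map_smul]⟩⟩)
     (fun f f' => LinMap.ext (funext fun β => g.2.map_add _ _))
     (fun r f => LinMap.ext rfl) α.2⟩

variable (R S P)

/-- The functor `RHom_S(G_P,−)` from unitary left `S`-modules to unitary left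
`R`-modules. -/
def rHomGF [HasLocalUnits R] : UMod.{u, u} S ⥤ UMod.{u, u} R where
  obj N := ⟨RHomG R S P N.carrier, umax_unitary⟩
  map g := ⟨rHomGMap g,
    ⟨fun α β => Subtype.ext (LinMap.ext (funext fun x =>
       show g.1 (α.1.1 x + β.1.1 x) = g.1 (α.1.1 x) + g.1 (β.1.1 x) from g.2.map_add _ _)),
     fun r α => Subtype.ext (LinMap.ext (funext fun x => rfl))⟩⟩
  map_id N := LinMap.ext (funext fun α => Subtype.ext (LinMap.ext (funext fun x => rfl)))
  map_comp f g := LinMap.ext (funext fun α => Subtype.ext (LinMap.ext (funext fun x => rfl)))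

variable {R S P}

/-- The inner component of the evaluation map `γ`: for `n ∈ N` and
`β ∈ Hom_R(P,R)`, the homomorphism `P → N`, `x ↦ (x)β·n`. -/
def gammaInner {N : Type u} [AddCommGroup N] [LMod R N] (n : N) (β : LinMap R P R) :
    LinMap R P N :=
  ⟨fun x => (β.1 x) • n,
   ⟨fun x y => by rw [β.2.map_add, LMod.add_smul'],
    fun r x => by rw [β.2.map_smul, NonUnitalRing.smul_def, LMod.mul_smul']⟩⟩

theorem gammaInner_mem {N : Type u} [AddCommGroup N] [LMod R N] (n : N)
    {β : LinMap R P R} (hβ : β ∈ umax S (LinMap R P R)) :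
    gammaInner n β ∈ umax S (LinMap R P N) :=
  umax_mapsTo (C := S) (fun β => gammaInner n β)
    (fun β β' => LinMap.ext (funext fun x => LMod.add_smul' _ _ _))
    (fun s β => LinMap.ext rfl) hβ

variable (R S P)

/-- The evaluation map `γ_N : N → RHom_S(G_P, SHom_R(P,N))` (before checking that
its values lie in the unitary part `R·Hom_S(G_P, SHom_R(P,N))`):
`n ↦ (β ↦ (x ↦ (x)β·n))`. -/
def gammaFun (N : Type u) [AddCommGroup N] [LMod R N] (n : N) :
    LinMap S (GP R S P) (SHom R S P N) :=
  ⟨fun β => ⟨gammaInner n β.1, gammaInner_mem n β.2⟩,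
   ⟨fun β β' => Subtype.ext (LinMap.ext (funext fun x => LMod.add_smul' _ _ _)),
    fun s β => Subtype.ext (LinMap.ext rfl)⟩⟩

/-- The `s`-trace `sTr(P,M) = Σ_{g ∈ SHom_R(P,M)} Im g` of `P` in `M`. -/
def sTrSub (M : Type u) [AddCommGroup M] [LMod R M] : AddSubgroup M :=
  AddSubgroup.closure {m : M | ∃ f : LinMap R P M, f ∈ umax S (LinMap R P M) ∧ ∃ x : P, m = f.1 x}

/-- `st_P(M) = 0`: the only `R`-submodule `K ⊆ M` with `SHom_R(P,K) = 0` is the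
zero submodule (equivalently, the sum of all such submodules is zero). -/
def stPZero (M : Type u) [AddCommGroup M] [LMod R M] : Prop :=
  ∀ K : AddSubgroup M, (∀ (r : R) (x : M), x ∈ K → r • x ∈ K) →
    (∀ (s : S) (f : LinMap R P M), (∀ x : P, f.1 x ∈ K) → s • f = 0) →
    ∀ m ∈ K, m = 0

/-- `SHom_R(P,X) = 0`. -/
def sHomZero (X : Type u) [AddCommGroup X] [LMod R X] : Prop :=
  ∀ f : LinMap R P X, f ∈ umax S (LinMap R P X) → f = 0

end shom
/-! ### Bimodules, dual hom functors, reflexivity, Morita duality bimodules,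
finiteness conditions -/

section bimod

variable (R S : Type u) [NonUnitalRing R] [NonUnitalRing S]

/-- A bundled `R`-`S`-bimodule over non-unital rings. -/
structure BimodLU : Type (u + 1) where
  carrier : Type u
  [grp : AddCommGroup carrier]
  [lmod : LMod R carrier]
  [rmod : LMod Sᵐᵒᵖ carrier]
  [comm : SMulCommClass R Sᵐᵒᵖ carrier]
  [comm' : SMulCommClass Sᵐᵒᵖ R carrier]

attribute [instance] BimodLU.grp BimodLU.lmod BimodLU.rmod BimodLU.comm BimodLU.comm'

variable (U : Type u) [AddCommGroup U] [LMod R U] [LMod Sᵐᵒᵖ U] [SMulCommClass R Sᵐᵒᵖ U]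
  [SMulCommClass Sᵐᵒᵖ R U]

/-- The canonical map `μ : S → End_R(U)`, `s ↦ (x ↦ x·s)`. -/
def muMap (s : S) : LinMap R U U :=
  ⟨fun x => op s • x,
   ⟨fun x y => LMod.smul_add' (op s) x y, fun r x => (smul_comm r (op s) x).symm⟩⟩

/-- The canonical map `λ : R → End_S(U)`, `r ↦ (x ↦ r·x)`. -/
def lambdaMap (r : R) : LinMap Sᵐᵒᵖ U U :=
  ⟨fun x => r • x,
   ⟨fun x y => LMod.smul_add' r x y, fun s x => smul_comm r s x⟩⟩

/-- `Hom_R(M,U)S`, the largest unitary right `S`-submodule of `Hom_R(M,U)`,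
as a type (a right `S`-module, i.e. a left `Sᵐᵒᵖ`-module). -/
abbrev DHomL (M : Type u) [AddCommGroup M] [LMod R M] : Type u :=
  ↥(umax Sᵐᵒᵖ (LinMap R M U))

/-- `RHom_S(N,U)`, the largest unitary left `R`-submodule of `Hom_S(N,U)`
for a right `S`-module `N`, as a type. -/
abbrev DHomR (N : Type u) [AddCommGroup N] [LMod Sᵐᵒᵖ N] : Type u :=
  ↥(umax R (LinMap Sᵐᵒᵖ N U))

variable {R S U}

/-- Action of the contravariant functor `Hom_R(−,U)S` on morphisms
(precomposition). -/
def dHomLMap {M N : Type u} [AddCommGroup M] [AddCommGroup N] [LMod R M] [LMod R N]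
    (f : LinMap R M N) (α : DHomL R S U N) : DHomL R S U M :=
  ⟨⟨fun x => α.1.1 (f.1 x),
    ⟨fun x y => by rw [f.2.map_add, α.1.2.map_add],
     fun r x => by rw [f.2.map_smul, α.1.2.map_smul]⟩⟩,
   umax_mapsTo (C := Sᵐᵒᵖ)
     (fun g => ⟨fun x => g.1 (f.1 x),
       ⟨fun x y => by rw [f.2.map_add, g.2.map_add],
        fun r x => by rw [f.2.map_smul, g.2.map_smul]⟩⟩)
     (fun g g' => LinMap.ext rfl) (fun s g => LinMap.ext rfl) α.2⟩

/-- Action of the contravariant functor `RHom_S(−,U)` on morphisms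
(precomposition). -/
def dHomRMap {M N : Type u} [AddCommGroup M] [AddCommGroup N] [LMod Sᵐᵒᵖ M]
    [LMod Sᵐᵒᵖ N] (f : LinMap Sᵐᵒᵖ M N) (α : DHomR R S U N) : DHomR R S U M :=
  ⟨⟨fun x => α.1.1 (f.1 x),
    ⟨fun x y => by rw [f.2.map_add, α.1.2.map_add],
     fun s x => by rw [f.2.map_smul, α.1.2.map_smul]⟩⟩,
   umax_mapsTo (C := R)
     (fun g => ⟨fun x => g.1 (f.1 x),
       ⟨fun x y => by rw [f.2.map_add, g.2.map_add],
        fun s x => by rw [f.2.map_smul, g.2.map_smul]⟩⟩)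
     (fun g g' => LinMap.ext rfl) (fun r g => LinMap.ext rfl) α.2⟩

variable (R S U)

/-- The contravariant functor `Hom_R(−,U)S` from unitary left `R`-modules to
unitary right `S`-modules. -/
def dualL [HasLocalUnits S] : (UMod.{u, u} R)ᵒᵖ ⥤ UMod.{u, u} Sᵐᵒᵖ where
  obj M := ⟨DHomL R S U M.unop.carrier, umax_unitary⟩
  map f := ⟨dHomLMap f.unop,
    ⟨fun α β => Subtype.ext (LinMap.ext (funext fun x => rfl)),
     fun s α => Subtype.ext (LinMap.ext (funext fun x => rfl))⟩⟩
  map_id M := LinMap.ext (funext fun α => Subtype.ext (LinMap.ext (funext fun x => rfl)))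
  map_comp f g := LinMap.ext (funext fun α => Subtype.ext (LinMap.ext (funext fun x => rfl)))

/-- The contravariant functor `RHom_S(−,U)` from unitary right `S`-modules to
unitary left `R`-modules. -/
def dualR [HasLocalUnits R] : (UMod.{u, u} Sᵐᵒᵖ)ᵒᵖ ⥤ UMod.{u, u} R where
  obj N := ⟨DHomR R S U N.unop.carrier, umax_unitary⟩
  map f := ⟨dHomRMap f.unop,
    ⟨fun α β => Subtype.ext (LinMap.ext (funext fun x => rfl)),
     fun r α => Subtype.ext (LinMap.ext (funext fun x => rfl))⟩⟩
  map_id N := LinMap.ext (funext fun α => Subtype.ext (LinMap.ext (funext fun x => rfl)))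
  map_comp f g := LinMap.ext (funext fun α => Subtype.ext (LinMap.ext (funext fun x => rfl)))

/-- The underlying function of the evaluation map
`φ_X : X → RHom_S(Hom_R(X,U)S, U)`, `(x)φ_X : β ↦ (x)β`. -/
def evalFunL (X : Type u) [AddCommGroup X] [LMod R X] (x : X) :
    LinMap Sᵐᵒᵖ (DHomL R S U X) U :=
  ⟨fun β => β.1.1 x, ⟨fun β β' => rfl, fun s β => rfl⟩⟩

/-- A unitary left `R`-module `X` is `U`-reflexive: the evaluation map
`φ_X : X → RHom_S(Hom_R(X,U)S, U)` is an isomorphism. -/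
def IsLReflexive (X : Type u) [AddCommGroup X] [LMod R X] : Prop :=
  ∃ h : ∀ x : X, evalFunL R S U X x ∈ umax R (LinMap Sᵐᵒᵖ (DHomL R S U X) U),
    Function.Bijective (fun x : X => (⟨evalFunL R S U X x, h x⟩ : DHomR R S U (DHomL R S U X)))

/-- The underlying function of the evaluation map
`ψ_Y : Y → Hom_R(RHom_S(Y,U),U)S`, `ψ_Y(y) : α ↦ α(y)`. -/
def evalFunR (Y : Type u) [AddCommGroup Y] [LMod Sᵐᵒᵖ Y] (y : Y) :
    LinMap R (DHomR R S U Y) U :=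
  ⟨fun α => α.1.1 y, ⟨fun α α' => rfl, fun r α => rfl⟩⟩

/-- A unitary right `S`-module `Y` is `U`-reflexive: the evaluation map
`ψ_Y : Y → Hom_R(RHom_S(Y,U),U)S` is an isomorphism. -/
def IsRReflexive (Y : Type u) [AddCommGroup Y] [LMod Sᵐᵒᵖ Y] : Prop :=
  ∃ h : ∀ y : Y, evalFunR R S U Y y ∈ umax Sᵐᵒᵖ (LinMap R (DHomR R S U Y) U),
    Function.Bijective (fun y : Y => (⟨evalFunR R S U Y y, h y⟩ : DHomL R S U (DHomR R S U Y)))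

/-- Properties (I) and (II) of a Morita duality bimodule: `U` is the direct
limit of a split direct system of finitely generated injective unitary left
`R`-modules whose members form a cogenerating set for the category of unitary
left `R`-modules, and `μ : S → End_R(U)` is a monomorphism whose image is
exactly the set of endomorphisms factoring through one of the induced
projections. -/
def SatisfiesI_II : Prop :=
  ∃ (ι : Type u) (rel : ι → ι → Prop),
    (∀ i, rel i i) ∧ (∀ {i j k}, rel i j → rel j k → rel i k) ∧
    Nonempty ι ∧ (∀ i j, ∃ k, rel i k ∧ rel j k) ∧
    ∃ (D : SplitSystem.{u, u} R ι rel) (c : LimitCocone R D U)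
      (proj : ∀ i, LinMap R U (D.obj i).carrier),
      (∀ i, IsFG R (D.obj i).carrier ∧ CategoryTheory.Injective (D.obj i)) ∧
      IsCogenSet R {M | ∃ i, M = D.obj i} ∧
      (∀ i (x : (D.obj i).carrier), (proj i).1 ((c.incl i).1 x) = x) ∧
      (∀ {i j} (h : rel i j) (x : U), (D.split h).1 ((proj j).1 x) = (proj i).1 x) ∧
      Function.Injective (muMap R S U) ∧
      Set.range (muMap R S U) =
        {g : LinMap R U U | ∃ (i : ι) (γ : LinMap R (D.obj i).carrier U),
          g.1 = fun x => γ.1 ((proj i).1 x)}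

/-- Properties (III) and (IV) of a Morita duality bimodule (the right-module
side, dual to (I) and (II)). -/
def SatisfiesIII_IV : Prop :=
  ∃ (ι : Type u) (rel : ι → ι → Prop),
    (∀ i, rel i i) ∧ (∀ {i j k}, rel i j → rel j k → rel i k) ∧
    Nonempty ι ∧ (∀ i j, ∃ k, rel i k ∧ rel j k) ∧
    ∃ (D : SplitSystem.{u, u} Sᵐᵒᵖ ι rel) (c : LimitCocone Sᵐᵒᵖ D U)
      (proj : ∀ i, LinMap Sᵐᵒᵖ U (D.obj i).carrier),
      (∀ i, IsFG Sᵐᵒᵖ (D.obj i).carrier ∧ CategoryTheory.Injective (D.obj i)) ∧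
      IsCogenSet Sᵐᵒᵖ {M | ∃ i, M = D.obj i} ∧
      (∀ i (x : (D.obj i).carrier), (proj i).1 ((c.incl i).1 x) = x) ∧
      (∀ {i j} (h : rel i j) (x : U), (D.split h).1 ((proj j).1 x) = (proj i).1 x) ∧
      Function.Injective (lambdaMap R S U) ∧
      Set.range (lambdaMap R S U) =
        {g : LinMap Sᵐᵒᵖ U U | ∃ (i : ι) (γ : LinMap Sᵐᵒᵖ (D.obj i).carrier U),
          g.1 = fun x => γ.1 ((proj i).1 x)}

/-- A Morita duality `R`-`S`-bimodule. -/
def IsMoritaDualityBimod : Prop :=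
  IsUnitary R U ∧ IsUnitary Sᵐᵒᵖ U ∧ SatisfiesI_II R S U ∧ SatisfiesIII_IV R S U

end bimod

section cats

variable (R : Type u) [NonUnitalRing R]

/-- The category of finitely generated unitary left `R`-modules. -/
abbrev FGMod := CategoryTheory.ObjectProperty.FullSubcategory (fun M : UMod.{u, u} R => IsFG R M.carrier)

/-- The category of finitely generated injective unitary left `R`-modules. -/
abbrev InjFGMod := CategoryTheory.ObjectProperty.FullSubcategory
  (fun M : UMod.{u, u} R => IsFG R M.carrier ∧ CategoryTheory.Injective M)

/-- The category of finitely generated projective unitary left `R`-modules. -/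
abbrev ProjFGMod := CategoryTheory.ObjectProperty.FullSubcategory
  (fun M : UMod.{u, u} R => IsFG R M.carrier ∧ CategoryTheory.Projective M)

/-- There is a duality (an additive contravariant equivalence) between the
categories of finitely generated unitary left `R`-modules and finitely
generated unitary right `S`-modules. -/
def ExistsFGDuality (R S : Type u) [NonUnitalRing R] [NonUnitalRing S] : Prop :=
  ∃ F : (FGMod R)ᵒᵖ ⥤ FGMod Sᵐᵒᵖ, F.Additive ∧ F.IsEquivalence

/-- Bundled ring with local units. -/
structure RingLU : Type (u + 1) where
  carrier : Type u
  [ring : NonUnitalRing carrier]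
  [lu : HasLocalUnits carrier]

attribute [instance] RingLU.ring RingLU.lu

/-- A ring with local units is left Morita if there is a ring `R'` with local
units and a duality from finitely generated unitary left `R`-modules to
finitely generated unitary right `R'`-modules. -/
def IsLeftMorita : Prop :=
  ∃ R' : RingLU.{u}, ExistsFGDuality R R'.carrier

/-- `R` is left locally finite: every finitely generated unitary left
`R`-module has finite length (equivalently, the lengths of chains of
submodules of such a module are bounded). -/
def IsLeftLocallyFinite : Prop :=
  ∀ (M : Type u) [AddCommGroup M] [LMod R M], IsUnitary R M → IsFG R M →
    ∃ n : ℕ, ∀ c : Fin (n + 1) → AddSubgroup M,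
      (∀ i (r : R) x, x ∈ c i → r • x ∈ c i) →
      ¬(∀ i : Fin n, c i.castSucc < c i.succ)

/-- `R` is left locally noetherian: every finitely generated unitary left
`R`-module is noetherian. -/
def IsLeftLocallyNoetherian : Prop :=
  ∀ (M : Type u) [AddCommGroup M] [LMod R M], IsUnitary R M → IsFG R M →
    ∀ c : ℕ → AddSubgroup M, (∀ i (r : R) x, x ∈ c i → r • x ∈ c i) →
      (∀ i, c i ≤ c (i + 1)) → ∃ n, ∀ m, n ≤ m → c m = c n

end cats

section principal

variable (R : Type u) [NonUnitalRing R]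

/-- The principal left ideal `Re` of a non-unital ring, for an element `e`. -/
def principalLeft (e : R) : AddSubgroup R where
  carrier := {y : R | ∃ r : R, y = r * e}
  add_mem' := by
    rintro a b ⟨r, hr⟩ ⟨s, hs⟩
    exact ⟨r + s, by rw [hr, hs, add_mul]⟩
  zero_mem' := ⟨0, by rw [zero_mul]⟩
  neg_mem' := by
    rintro a ⟨r, hr⟩
    exact ⟨-r, by rw [hr, neg_mul]⟩

instance (e : R) : LMod R ↥(principalLeft R e) where
  smul r y := ⟨r * y.1, by obtain ⟨s, hs⟩ := y.2; exact ⟨r * s, by rw [hs, mul_assoc]⟩⟩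
  smul_add' r m n := Subtype.ext (mul_add r m.1 n.1)
  add_smul' r s m := Subtype.ext (add_mul r s m.1)
  mul_smul' r s m := Subtype.ext (mul_assoc r s m.1)

/-- The principal right ideal `fS` of a non-unital ring, as a right module
(left module over the opposite ring). -/
def principalRight (f : R) : AddSubgroup R where
  carrier := {y : R | ∃ s : R, y = f * s}
  add_mem' := by
    rintro a b ⟨r, hr⟩ ⟨s, hs⟩
    exact ⟨r + s, by rw [hr, hs, mul_add]⟩
  zero_mem' := ⟨0, by rw [mul_zero]⟩
  neg_mem' := by
    rintro a ⟨r, hr⟩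
    exact ⟨-r, by rw [hr, mul_neg]⟩

instance (f : R) : LMod Rᵐᵒᵖ ↥(principalRight R f) where
  smul s y := ⟨y.1 * s.unop, by
    obtain ⟨t, ht⟩ := y.2; exact ⟨t * s.unop, by rw [ht, mul_assoc]⟩⟩
  smul_add' s m n := Subtype.ext (add_mul m.1 n.1 s.unop)
  add_smul' s t m := Subtype.ext (mul_add m.1 s.unop t.unop)
  mul_smul' s t m := Subtype.ext (mul_assoc m.1 t.unop s.unop).symm

end principal

section restr

variable (R S : Type u) [NonUnitalRing R] [NonUnitalRing S] [HasLocalUnits R] [HasLocalUnits S]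
variable (U : Type u) [AddCommGroup U] [LMod R U] [LMod Sᵐᵒᵖ U] [SMulCommClass R Sᵐᵒᵖ U]
  [SMulCommClass Sᵐᵒᵖ R U]

/-- The restriction of the contravariant functor `Hom_R(−,U)S` to finitely
generated modules, given that it preserves finite generation. -/
def dualLRestr (hFG : ∀ X : UMod.{u, u} R, IsFG R X.carrier →
    IsFG Sᵐᵒᵖ ((dualL R S U).obj (Opposite.op X)).carrier) :
    (FGMod R)ᵒᵖ ⥤ FGMod Sᵐᵒᵖ :=
  CategoryTheory.ObjectProperty.lift _
    ((CategoryTheory.ObjectProperty.ι _).op ⋙ dualL R S U)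
    (fun X => hFG X.unop.obj X.unop.property)

/-- The restriction of the contravariant functor `RHom_S(−,U)` to finitely
generated modules, given that it preserves finite generation. -/
def dualRRestr (hFG : ∀ Y : UMod.{u, u} Sᵐᵒᵖ, IsFG Sᵐᵒᵖ Y.carrier →
    IsFG R ((dualR R S U).obj (Opposite.op Y)).carrier) :
    (FGMod Sᵐᵒᵖ)ᵒᵖ ⥤ FGMod R :=
  CategoryTheory.ObjectProperty.lift _
    ((CategoryTheory.ObjectProperty.ι _).op ⋙ dualR R S U)
    (fun Y => hFG Y.unop.obj Y.unop.property)

end restr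
/-! ### Direct sums of modules over non-unital rings -/

section dfinsupp

variable {R : Type u} [NonUnitalRing R] {ι : Type v} {β : ι → Type w}
  [∀ i, AddCommGroup (β i)] [∀ i, LMod R (β i)]

/-- Pointwise scalar action on a direct sum. -/
def dfinsuppSMul (r : R) (f : Π₀ i, β i) : Π₀ i, β i :=
  f.mapRange (fun _ x => r • x) (fun _ => LMod.smul_zero' r)

theorem dfinsuppSMul_apply (r : R) (f : Π₀ i, β i) (i : ι) :
    dfinsuppSMul r f i = r • f i := DFinsupp.mapRange_apply _ _ f i

instance DFinsupp.instLMod : LMod R (Π₀ i, β i) where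
  smul := dfinsuppSMul
  smul_add' r f g := by
    ext i
    show dfinsuppSMul r (f + g) i = (dfinsuppSMul r f + dfinsuppSMul r g) i
    rw [DFinsupp.add_apply, dfinsuppSMul_apply, dfinsuppSMul_apply, dfinsuppSMul_apply,
      DFinsupp.add_apply]
    exact LMod.smul_add' r (f i) (g i)
  add_smul' r s f := by
    ext i
    show dfinsuppSMul (r + s) f i = (dfinsuppSMul r f + dfinsuppSMul s f) i
    rw [DFinsupp.add_apply, dfinsuppSMul_apply, dfinsuppSMul_apply, dfinsuppSMul_apply]
    exact LMod.add_smul' r s (f i)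
  mul_smul' r s f := by
    ext i
    show dfinsuppSMul (r * s) f i = dfinsuppSMul r (dfinsuppSMul s f) i
    rw [dfinsuppSMul_apply, dfinsuppSMul_apply, dfinsuppSMul_apply]
    exact LMod.mul_smul' r s (f i)

@[simp] theorem DFinsupp.lmod_smul_apply (r : R) (f : Π₀ i, β i) (i : ι) :
    (r • f) i = r • f i := dfinsuppSMul_apply r f i

end dfinsupp
/-! ### Miscellaneous helpers: submodule stability, `Pf`, traces, sums -/

section extra

variable {R : Type u} [NonUnitalRing R] {M : Type v} [AddCommGroup M] [LMod R M]

theorem closure_smul_stable {s : Set M}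
    (h : ∀ (r : R) (x : M), x ∈ s → r • x ∈ AddSubgroup.closure s) (r : R) {x : M}
    (hx : x ∈ AddSubgroup.closure s) : r • x ∈ AddSubgroup.closure s := by
  induction hx using AddSubgroup.closure_induction with
  | mem y hy => exact h r y hy
  | zero => rw [LMod.smul_zero']; exact AddSubgroup.zero_mem _
  | add y z hy hz ihy ihz => rw [LMod.smul_add']; exact AddSubgroup.add_mem _ ihy ihz
  | neg y hy ihy => rw [LMod.smul_neg']; exact AddSubgroup.neg_mem _ ihy

end extra

section pe

variable (R S : Type u) [NonUnitalRing R] [NonUnitalRing S]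
variable (P : Type u) [AddCommGroup P] [LMod R P] [LMod Sᵐᵒᵖ P] [SMulCommClass R Sᵐᵒᵖ P]

/-- The submodule `Pf = {x·f | x ∈ P}` of `P`, for `f ∈ S`. -/
def peSub (f : S) : AddSubgroup P where
  carrier := Set.range (fun x : P => (op f : Sᵐᵒᵖ) • x)
  add_mem' := by
    rintro a b ⟨x, rfl⟩ ⟨y, rfl⟩
    exact ⟨x + y, LMod.smul_add' (op f) x y⟩
  zero_mem' := ⟨0, LMod.smul_zero' _⟩
  neg_mem' := by
    rintro a ⟨x, rfl⟩
    exact ⟨-x, LMod.smul_neg' (op f) x⟩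

instance (f : S) : LMod R ↥(peSub S P f) where
  smul r y := ⟨r • y.1, by
    obtain ⟨x, hx⟩ := y.2
    exact ⟨r • x, by rw [← hx, smul_comm]⟩⟩
  smul_add' r m n := Subtype.ext (LMod.smul_add' r m.1 n.1)
  add_smul' r s m := Subtype.ext (LMod.add_smul' r s m.1)
  mul_smul' r s m := Subtype.ext (LMod.mul_smul' r s m.1)

variable {R S P} in
theorem sTrSub_smul_stable {M : Type u} [AddCommGroup M] [LMod R M] (r : R) {m : M}
    (hm : m ∈ sTrSub R S P M) : r • m ∈ sTrSub R S P M := by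
  refine closure_smul_stable (fun r' x hx => ?_) r hm
  obtain ⟨g, hg, y, rfl⟩ := hx
  exact AddSubgroup.subset_closure ⟨g, hg, r' • y, (g.2.map_smul r' y).symm⟩

instance (M : Type u) [AddCommGroup M] [LMod R M] : LMod R ↥(sTrSub R S P M) where
  smul r y := ⟨r • y.1, sTrSub_smul_stable r y.2⟩
  smul_add' r m n := Subtype.ext (LMod.smul_add' r m.1 n.1)
  add_smul' r s m := Subtype.ext (LMod.add_smul' r s m.1)
  mul_smul' r s m := Subtype.ext (LMod.mul_smul' r s m.1)

end pe

section sum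

/-- Summation over a direct sum against a family of additive maps
(the canonical map `⊕_I M_i → N`). -/
noncomputable def dfinsuppSum {ι : Type u} {β : ι → Type v} [∀ i, AddCommGroup (β i)]
    {γ : Type w} [AddCommGroup γ] (f : ∀ i, β i →+ γ) (x : Π₀ i, β i) : γ :=
  letI := Classical.decEq ι
  DFinsupp.sumAddHom f x

end sum


/-! ### Auxiliary lemmas for Statement 14 -/

section aux14

variable {R : Type u} [NonUnitalRing R] {M : Type v} [AddCommGroup M] [LMod R M]

/-- The quotient module structure on `M ⧸ K` for an `R`-stable subgroup `K`. -/
def quotLMod (K : AddSubgroup M) (hst : ∀ (r : R) (x : M), x ∈ K → r • x ∈ K) :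
    LMod R (M ⧸ K) where
  smul r := QuotientAddGroup.map K K (AddMonoidHom.mk' (r • ·) (LMod.smul_add' r))
    (fun x hx => hst r x hx)
  smul_add' r m n := map_add _ m n
  add_smul' r s m := QuotientAddGroup.induction_on m (fun x => by
    show ((((r + s) • x : M)) : M ⧸ K) = ((r • x : M) : M ⧸ K) + ((s • x : M) : M ⧸ K)
    rw [LMod.add_smul']
    rfl)
  mul_smul' r s m := QuotientAddGroup.induction_on m (fun x => by
    show ((((r * s) • x : M)) : M ⧸ K) = (((r • (s • x) : M)) : M ⧸ K)
    rw [LMod.mul_smul'])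

theorem quotLMod_smul_mk (K : AddSubgroup M) (hst : ∀ (r : R) (x : M), x ∈ K → r • x ∈ K)
    (r : R) (x : M) :
    (letI := quotLMod K hst; (r • ((x : M ⧸ K)) : M ⧸ K)) = ((r • x : M) : M ⧸ K) :=
  rfl

theorem quotLMod_unitary (K : AddSubgroup M) (hst : ∀ (r : R) (x : M), x ∈ K → r • x ∈ K)
    (hM : IsUnitary R M) :
    letI := quotLMod K hst; IsUnitary R (M ⧸ K) := by
  letI := quotLMod K hst
  intro q
  refine QuotientAddGroup.induction_on q (fun m => ?_)
  have hm := hM m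
  induction hm using AddSubgroup.closure_induction with
  | mem y hy =>
    obtain ⟨r, n, rfl⟩ := hy
    exact AddSubgroup.subset_closure ⟨r, ((n : M ⧸ K)), rfl⟩
  | zero => exact AddSubgroup.zero_mem _
  | add y z _ _ ihy ihz => exact AddSubgroup.add_mem _ ihy ihz
  | neg y _ ihy => exact AddSubgroup.neg_mem _ ihy

end aux14

section aux14b

variable {R : Type u} [NonUnitalRing R] {I : Type v} {P : Type w} [AddCommGroup P] [LMod R P]

theorem single_lsmul [DecidableEq I] (r : R) (i : I) (x : P) :
    (DFinsupp.single i (r • x) : Π₀ _i : I, P) = r • DFinsupp.single i x := by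
  ext j
  rw [DFinsupp.lmod_smul_apply]
  rcases eq_or_ne i j with rfl | h
  · rw [DFinsupp.single_eq_same, DFinsupp.single_eq_same]
  · rw [DFinsupp.single_eq_of_ne h.symm, DFinsupp.single_eq_of_ne h.symm, LMod.smul_zero']

theorem dfinsuppSum_lsmul {M : Type w} [AddCommGroup M] [LMod R M]
    (φ : I → (P →+ M)) (hφ : ∀ (i : I) (r : R) (x : P), φ i (r • x) = r • φ i x)
    (r : R) (h : Π₀ _i : I, P) :
    dfinsuppSum φ (r • h) = r • dfinsuppSum φ h := by
  unfold dfinsuppSum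
  letI : DecidableEq I := Classical.decEq I
  induction h using DFinsupp.induction with
  | h0 => rw [LMod.smul_zero', map_zero, LMod.smul_zero']
  | ha i b x hxi hb ih =>
    rw [LMod.smul_add', ← single_lsmul, map_add, map_add, DFinsupp.sumAddHom_single,
      DFinsupp.sumAddHom_single, hφ, ih, LMod.smul_add']

end aux14b

section aux14c

variable {ι : Type u} {β : ι → Type v} [∀ i, AddCommGroup (β i)]
  {γ : Type w} [AddCommGroup γ]

theorem dfinsuppSum_zero (f : ∀ i, β i →+ γ) : dfinsuppSum f 0 = 0 := by
  unfold dfinsuppSum; exact map_zero _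

theorem dfinsuppSum_add (f : ∀ i, β i →+ γ) (x y : Π₀ i, β i) :
    dfinsuppSum f (x + y) = dfinsuppSum f x + dfinsuppSum f y := by
  unfold dfinsuppSum; exact map_add _ x y

theorem dfinsuppSum_neg (f : ∀ i, β i →+ γ) (x : Π₀ i, β i) :
    dfinsuppSum f (-x) = -dfinsuppSum f x := by
  unfold dfinsuppSum; exact map_neg _ x

theorem dfinsuppSum_single (f : ∀ i, β i →+ γ) (i : ι) (x : β i) :
    dfinsuppSum f (letI := Classical.decEq ι; DFinsupp.single i x) = f i x := by
  unfold dfinsuppSum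
  letI := Classical.decEq ι
  exact DFinsupp.sumAddHom_single f i x

end aux14c

theorem hom_val_mem_sTrSub (R S : Type u) [NonUnitalRing R] [NonUnitalRing S]
    (P : Type u) [AddCommGroup P] [LMod R P] [LMod Sᵐᵒᵖ P] [SMulCommClass R Sᵐᵒᵖ P]
    (hr : IsUnitary Sᵐᵒᵖ P) {M : Type u} [AddCommGroup M] [LMod R M]
    (h : LinMap R P M) (x : P) : h.1 x ∈ sTrSub R S P M := by
  have hx := hr x
  induction hx using AddSubgroup.closure_induction with
  | mem y hy =>
    obtain ⟨s, p, rfl⟩ := hy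
    have key : h.1 (s • p) = (s.unop • h).1 p := by
      rw [LinMap.pre_smul_apply, MulOpposite.op_unop]
    rw [key]
    exact AddSubgroup.subset_closure ⟨s.unop • h, smul_mem_umax s.unop h, p, rfl⟩
  | zero => rw [h.2.map_zero]; exact AddSubgroup.zero_mem _
  | add y z _ _ ihy ihz => rw [h.2.map_add]; exact AddSubgroup.add_mem _ ihy ihz
  | neg y _ ihy => rw [h.2.map_neg]; exact AddSubgroup.neg_mem _ ihy

/-! ## STATEMENT 14
Characterisations of generators among unitary bimodules. -/
theorem generator_characterisations
    (R S : Type u) [NonUnitalRing R] [NonUnitalRing S]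
    [HasLocalUnits R] [HasLocalUnits S]
    (P : Type u) [AddCommGroup P] [LMod R P] [LMod Sᵐᵒᵖ P] [SMulCommClass R Sᵐᵒᵖ P]
    (hl : IsUnitary R P) (hr : IsUnitary Sᵐᵒᵖ P) :
    -- (a) ↔ (b):
    (IsGenerator R ⟨P, hl⟩ ↔
      ∀ M : UMod.{u, u} R, ∀ m : M.carrier, m ∈ sTrSub R S P M.carrier) ∧
    -- (a) ↔ (c): the canonical homomorphism `⊕_{SHom_R(P,M)} P → M`,
    -- `(x_α)_α ↦ Σ_α (x_α)α`, is an epimorphism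
    (IsGenerator R ⟨P, hl⟩ ↔
      ∀ M : UMod.{u, u} R, Function.Surjective
        (fun h : Π₀ _α : SHom R S P M.carrier, P =>
          dfinsuppSum (fun α : SHom R S P M.carrier =>
            AddMonoidHom.mk' α.1.1 α.1.2.map_add) h)) ∧
    -- (a) ↔ (d):
    (IsGenerator R ⟨P, hl⟩ ↔
      ∀ M : UMod.{u, u} R, ∃ I : Type u,
        ∃ g : LinMap R (Π₀ _i : I, P) M.carrier, Function.Surjective g.1) := by
  -- (a) → (b)
  have hab : IsGenerator R ⟨P, hl⟩ →
      ∀ M : UMod.{u, u} R, ∀ m : M.carrier, m ∈ sTrSub R S P M.carrier := by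
    intro ha M m
    by_contra hm
    set K : AddSubgroup M.carrier := sTrSub R S P M.carrier with hK
    have hst : ∀ (r : R) (x : M.carrier), x ∈ K → r • x ∈ K :=
      fun r x hx => sTrSub_smul_stable r hx
    letI := quotLMod K hst
    set Q : UMod.{u, u} R := ⟨M.carrier ⧸ K, quotLMod_unitary K hst M.unitary⟩ with hQ
    have hfhom : IsLHom R (fun x : M.carrier => ((x : M.carrier ⧸ K) : Q.carrier)) :=
      ⟨fun x y => rfl, fun r x => rfl⟩
    set f : M ⟶ Q := ⟨fun x => ((x : M.carrier ⧸ K)), hfhom⟩ with hf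
    have hfg : f ≠ (0 : M ⟶ Q) := by
      intro hEq
      apply hm
      have h1 : f.1 m = (0 : M ⟶ Q).1 m := by rw [hEq]
      exact (QuotientAddGroup.eq_zero_iff m).1 h1
    obtain ⟨h, hne⟩ := ha M Q f 0 hfg
    apply hne
    apply LinMap.ext
    funext x
    show ((h.1 x : M.carrier ⧸ K)) = (0 : M.carrier ⧸ K)
    exact (QuotientAddGroup.eq_zero_iff _).2 (hom_val_mem_sTrSub R S P hr h x)
  -- (b) → (c)
  have hbc : (∀ M : UMod.{u, u} R, ∀ m : M.carrier, m ∈ sTrSub R S P M.carrier) →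
      ∀ M : UMod.{u, u} R, Function.Surjective
        (fun h : Π₀ _α : SHom R S P M.carrier, P =>
          dfinsuppSum (fun α : SHom R S P M.carrier =>
            AddMonoidHom.mk' α.1.1 α.1.2.map_add) h) := by
    intro hb M m
    have hm := hb M m
    induction hm using AddSubgroup.closure_induction with
    | mem y hy =>
      obtain ⟨g, hg, x, rfl⟩ := hy
      have key := dfinsuppSum_single (fun α : SHom R S P M.carrier =>
        AddMonoidHom.mk' α.1.1 α.1.2.map_add) ⟨g, hg⟩ x
      exact ⟨_, key⟩
    | zero => exact ⟨0, dfinsuppSum_zero _⟩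
    | add y z _ _ ihy ihz =>
      obtain ⟨h1, rfl⟩ := ihy
      obtain ⟨h2, rfl⟩ := ihz
      exact ⟨h1 + h2, dfinsuppSum_add _ h1 h2⟩
    | neg y _ ihy =>
      obtain ⟨h1, rfl⟩ := ihy
      exact ⟨-h1, dfinsuppSum_neg _ h1⟩
  -- (c) → (d)
  have hcd : (∀ M : UMod.{u, u} R, Function.Surjective
        (fun h : Π₀ _α : SHom R S P M.carrier, P =>
          dfinsuppSum (fun α : SHom R S P M.carrier =>
            AddMonoidHom.mk' α.1.1 α.1.2.map_add) h)) →
      ∀ M : UMod.{u, u} R, ∃ I : Type u,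
        ∃ g : LinMap R (Π₀ _i : I, P) M.carrier, Function.Surjective g.1 := by
    intro hc M
    refine ⟨SHom R S P M.carrier,
      ⟨fun h => dfinsuppSum (fun α : SHom R S P M.carrier =>
          AddMonoidHom.mk' α.1.1 α.1.2.map_add) h, ⟨?_, ?_⟩⟩, hc M⟩
    · intro x y
      exact dfinsuppSum_add _ x y
    · intro r x
      exact dfinsuppSum_lsmul _ (fun α r x => α.1.2.map_smul r x) r x
  -- (d) → (a)
  have hda : (∀ M : UMod.{u, u} R, ∃ I : Type u,
        ∃ g : LinMap R (Π₀ _i : I, P) M.carrier, Function.Surjective g.1) →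
      IsGenerator R ⟨P, hl⟩ := by
    intro hd M B f g hfg
    by_contra hcon
    push_neg at hcon
    apply hfg
    obtain ⟨I, π, hπ⟩ := hd M
    apply LinMap.ext
    funext m
    obtain ⟨x, rfl⟩ := hπ m
    letI : DecidableEq I := Classical.decEq I
    induction x using DFinsupp.induction with
    | h0 =>
      show f.1 (π.1 0) = g.1 (π.1 0)
      rw [π.2.map_zero, f.2.map_zero, g.2.map_zero]
    | ha i b x hxi hb ih =>
      show f.1 (π.1 (DFinsupp.single i b + x)) = g.1 (π.1 (DFinsupp.single i b + x))
      have hi : IsLHom R (fun y : P => π.1 (DFinsupp.single i y)) :=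
        ⟨fun y z => by rw [DFinsupp.single_add, π.2.map_add],
         fun r y => by rw [single_lsmul, π.2.map_smul]⟩
      have hsingle : f.1 (π.1 (DFinsupp.single i b)) = g.1 (π.1 (DFinsupp.single i b)) := by
        have := congrFun (congrArg Subtype.val
          (hcon (⟨fun y => π.1 (DFinsupp.single i y), hi⟩ : (⟨P, hl⟩ : UMod.{u, u} R) ⟶ M))) b
        exact this
      rw [π.2.map_add, f.2.map_add, g.2.map_add, hsingle, ih]
  exact ⟨⟨hab, fun hb => hda (hcd (hbc hb))⟩,
    ⟨fun ha => hbc (hab ha), fun hc => hda (hcd hc)⟩,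
    ⟨fun ha => hcd (hbc (hab ha)), hda⟩⟩
end

section
/- Let R and S be rings with local units and let U be a unitary R-S-bimodule. (a) If the map λ: R → End_S(U), r ↦ (x ↦ rx), is a monomorphism and (End_S(U))(Im λ) = Im λ, then for each idempotent e ∈ R the left R-module Re is U-reflexive. (b) If the map μ: S → End_R(U), s ↦ (x ↦ xs), is a monomorphism and (Im μ)(End_R(U)) = Im μ, then for each idempotent f ∈ S the right S-module fS is U-reflexive. -/
set_option linter.unusedVariables false

/-! ### Core: non-unital rings with local units, modules, homomorphisms, categories -/

universe u v w

open MulOpposite CategoryTheory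

/-- For part (a): the homomorphism `Re → U`, `y ↦ y·u`. -/
def auxBa {R : Type u} [NonUnitalRing R] {U : Type u} [AddCommGroup U] [LMod R U]
    (e : R) (u : U) : LinMap R ↥(principalLeft R e) U :=
  ⟨fun y => y.1 • u,
   ⟨fun y z => LMod.add_smul' y.1 z.1 u,
    fun r y => LMod.mul_smul' r y.1 u⟩⟩

/-- For part (b): the homomorphism `fS → U`, `y ↦ u·y`. -/
def auxBb {S : Type u} [NonUnitalRing S] {U : Type u} [AddCommGroup U] [LMod Sᵐᵒᵖ U]
    (f : S) (u : U) : LinMap Sᵐᵒᵖ ↥(principalRight S f) U :=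
  ⟨fun y => op y.1 • u,
   ⟨fun y z => by
      show op (y.1 + z.1) • u = op y.1 • u + op z.1 • u
      rw [MulOpposite.op_add, LMod.add_smul'],
    fun s y => by
      show op (y.1 * s.unop) • u = s • (op y.1 • u)
      rw [MulOpposite.op_mul, MulOpposite.op_unop, LMod.mul_smul']⟩⟩


/-! ## STATEMENT 15
(a) If `λ : R → End_S(U)` is a monomorphism with `(End_S(U))(Im λ) = Im λ`,
then `Re` is `U`-reflexive for every idempotent `e ∈ R`; (b) dually for
`μ : S → End_R(U)` and `fS`. -/
theorem principal_modules_reflexive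
    (R S : Type u) [NonUnitalRing R] [NonUnitalRing S]
    [HasLocalUnits R] [HasLocalUnits S]
    (U : Type u) [AddCommGroup U] [LMod R U] [LMod Sᵐᵒᵖ U]
    [SMulCommClass R Sᵐᵒᵖ U] [SMulCommClass Sᵐᵒᵖ R U]
    (hUl : IsUnitary R U) (hUr : IsUnitary Sᵐᵒᵖ U) :
    -- (a):
    ((Function.Injective (lambdaMap R S U) ∧
      ((AddSubgroup.closure {h : LinMap Sᵐᵒᵖ U U |
          ∃ (r : R) (g : LinMap Sᵐᵒᵖ U U), h = lambdaMap R S U r * g} :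
          AddSubgroup (LinMap Sᵐᵒᵖ U U)) : Set (LinMap Sᵐᵒᵖ U U)) =
        Set.range (lambdaMap R S U)) →
      ∀ e : R, e * e = e → IsLReflexive R S U ↥(principalLeft R e)) ∧
    -- (b):
    ((Function.Injective (muMap R S U) ∧
      ((AddSubgroup.closure {h : LinMap R U U |
          ∃ (s : S) (g : LinMap R U U), h = muMap R S U s * g} :
          AddSubgroup (LinMap R U U)) : Set (LinMap R U U)) =
        Set.range (muMap R S U)) →
      ∀ f : S, f * f = f → IsRReflexive R S U ↥(principalRight S f)) := by
  
  constructor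
  · rintro ⟨hinj, him⟩ e he
    have hxe : ∀ y : ↥(principalLeft R e), y.1 * e = y.1 := by
      rintro ⟨y, r, rfl⟩
      show r * e * e = r * e
      rw [mul_assoc, he]
    let ea : ↥(principalLeft R e) := ⟨e, e, he.symm⟩
    have hy : ∀ y : ↥(principalLeft R e), y = y.1 • ea :=
      fun y => Subtype.ext (hxe y).symm
    have hBmem : ∀ u : U,
        auxBa e u ∈ umax Sᵐᵒᵖ (LinMap R ↥(principalLeft R e) U) := by
      intro u
      refine umax_mapsTo (C := Sᵐᵒᵖ) (auxBa e)
        (fun u v => LinMap.ext (funext fun y => LMod.smul_add' y.1 u v))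
        (fun s u => LinMap.ext (funext fun y => smul_comm y.1 s u))
        (hUr u)
    let Bd : U → DHomL R S U ↥(principalLeft R e) := fun u => ⟨auxBa e u, hBmem u⟩
    have hbeta : ∀ β : LinMap R ↥(principalLeft R e) U, β = auxBa e (β.1 ea) := by
      intro β
      refine LinMap.ext (funext fun y => ?_)
      conv_lhs => rw [hy y]
      exact β.2.map_smul y.1 ea
    have hmem : ∀ x : ↥(principalLeft R e),
        evalFunL R S U ↥(principalLeft R e) x ∈
          umax R (LinMap Sᵐᵒᵖ (DHomL R S U ↥(principalLeft R e)) U) := by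
      intro x
      have hx : evalFunL R S U ↥(principalLeft R e) x =
          x.1 • evalFunL R S U ↥(principalLeft R e) ea := by
        refine LinMap.ext (funext fun β => ?_)
        show β.1.1 x = x.1 • β.1.1 ea
        conv_lhs => rw [hy x]
        exact β.1.2.map_smul x.1 ea
      rw [hx]
      exact smul_mem_umax _ _
    refine ⟨hmem, ?_, ?_⟩
    · intro x x' hxx'
      have h0 : evalFunL R S U ↥(principalLeft R e) x =
          evalFunL R S U ↥(principalLeft R e) x' := congrArg Subtype.val hxx'
      have h1 : ∀ u : U, x.1 • u = x'.1 • u := fun u =>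
        congrFun (congrArg Subtype.val h0) (Bd u)
      have h2 : lambdaMap R S U x.1 = lambdaMap R S U x'.1 :=
        LinMap.ext (funext h1)
      exact Subtype.ext (hinj h2)
    · intro F
      have gadd : ∀ u v : U, F.1.1 (Bd (u + v)) = F.1.1 (Bd u) + F.1.1 (Bd v) := by
        intro u v
        have : Bd (u + v) = Bd u + Bd v :=
          Subtype.ext (LinMap.ext (funext fun y => LMod.smul_add' y.1 u v))
        rw [this, F.1.2.map_add]
      have gsmul : ∀ (s : Sᵐᵒᵖ) (u : U), F.1.1 (Bd (s • u)) = s • F.1.1 (Bd u) := by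
        intro s u
        have : Bd (s • u) = s • Bd u :=
          Subtype.ext (LinMap.ext (funext fun y => smul_comm y.1 s u))
        rw [this, F.1.2.map_smul]
      let g : LinMap Sᵐᵒᵖ U U := ⟨fun u => F.1.1 (Bd u), ⟨gadd, gsmul⟩⟩
      have hge : lambdaMap R S U e * g = g := by
        refine LinMap.ext (funext fun u => ?_)
        show F.1.1 (Bd (e • u)) = F.1.1 (Bd u)
        have : Bd (e • u) = Bd u := by
          refine Subtype.ext (LinMap.ext (funext fun y => ?_))
          show y.1 • (e • u) = y.1 • u
          rw [← LMod.mul_smul', hxe y]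
        rw [this]
      have hrange : g ∈ Set.range (lambdaMap R S U) := by
        rw [← him]
        exact AddSubgroup.subset_closure ⟨e, g, hge.symm⟩
      obtain ⟨r₀, hr₀⟩ := hrange
      refine ⟨⟨r₀ * e, r₀, rfl⟩, ?_⟩
      refine Subtype.ext (LinMap.ext (funext fun β => ?_))
      show β.1.1 ⟨r₀ * e, r₀, rfl⟩ = F.1.1 β
      have hβ : β = Bd (β.1.1 ea) := Subtype.ext (hbeta β.1)
      conv_rhs => rw [hβ]
      show β.1.1 ⟨r₀ * e, r₀, rfl⟩ = g.1 (β.1.1 ea)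
      rw [← hr₀]
      show β.1.1 ⟨r₀ * e, r₀, rfl⟩ = r₀ • β.1.1 ea
      have hre : (⟨r₀ * e, r₀, rfl⟩ : ↥(principalLeft R e)) = r₀ • ea :=
        Subtype.ext rfl
      rw [hre]
      exact β.1.2.map_smul r₀ ea
  · rintro ⟨hinj, him⟩ f hf
    have hyf : ∀ y : ↥(principalRight S f), f * y.1 = y.1 := by
      rintro ⟨y, s, rfl⟩
      show f * (f * s) = f * s
      rw [← mul_assoc, hf]
    let fb : ↥(principalRight S f) := ⟨f, f, hf.symm⟩
    have hy : ∀ y : ↥(principalRight S f), y = op y.1 • fb :=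
      fun y => Subtype.ext (hyf y).symm
    have hBmem : ∀ u : U,
        auxBb f u ∈ umax R (LinMap Sᵐᵒᵖ ↥(principalRight S f) U) := by
      intro u
      refine umax_mapsTo (C := R) (auxBb f)
        (fun u v => LinMap.ext (funext fun y => LMod.smul_add' (op y.1) u v))
        (fun r u => LinMap.ext (funext fun y => (smul_comm r (op y.1) u).symm))
        (hUl u)
    let Bd : U → DHomR R S U ↥(principalRight S f) := fun u => ⟨auxBb f u, hBmem u⟩
    have hbeta : ∀ α : LinMap Sᵐᵒᵖ ↥(principalRight S f) U,
        α = auxBb f (α.1 fb) := by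
      intro α
      refine LinMap.ext (funext fun y => ?_)
      conv_lhs => rw [hy y]
      exact α.2.map_smul (op y.1) fb
    have hmem : ∀ y : ↥(principalRight S f),
        evalFunR R S U ↥(principalRight S f) y ∈
          umax Sᵐᵒᵖ (LinMap R (DHomR R S U ↥(principalRight S f)) U) := by
      intro y
      have hx : evalFunR R S U ↥(principalRight S f) y =
          op y.1 • evalFunR R S U ↥(principalRight S f) fb := by
        refine LinMap.ext (funext fun α => ?_)
        show α.1.1 y = op y.1 • α.1.1 fb
        conv_lhs => rw [hy y]
        exact α.1.2.map_smul (op y.1) fb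
      rw [hx]
      exact smul_mem_umax _ _
    refine ⟨hmem, ?_, ?_⟩
    · intro y y' hyy'
      have h0 : evalFunR R S U ↥(principalRight S f) y =
          evalFunR R S U ↥(principalRight S f) y' := congrArg Subtype.val hyy'
      have h1 : ∀ u : U, op y.1 • u = op y'.1 • u := fun u =>
        congrFun (congrArg Subtype.val h0) (Bd u)
      have h2 : muMap R S U y.1 = muMap R S U y'.1 :=
        LinMap.ext (funext h1)
      exact Subtype.ext (hinj h2)
    · intro G
      have gadd : ∀ u v : U, G.1.1 (Bd (u + v)) = G.1.1 (Bd u) + G.1.1 (Bd v) := by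
        intro u v
        have : Bd (u + v) = Bd u + Bd v :=
          Subtype.ext (LinMap.ext (funext fun y => LMod.smul_add' (op y.1) u v))
        rw [this, G.1.2.map_add]
      have gsmul : ∀ (r : R) (u : U), G.1.1 (Bd (r • u)) = r • G.1.1 (Bd u) := by
        intro r u
        have : Bd (r • u) = r • Bd u :=
          Subtype.ext (LinMap.ext (funext fun y => (smul_comm r (op y.1) u).symm))
        rw [this, G.1.2.map_smul]
      let g : LinMap R U U := ⟨fun u => G.1.1 (Bd u), ⟨gadd, gsmul⟩⟩
      have hgf : muMap R S U f * g = g := by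
        refine LinMap.ext (funext fun u => ?_)
        show G.1.1 (Bd (op f • u)) = G.1.1 (Bd u)
        have : Bd (op f • u) = Bd u := by
          refine Subtype.ext (LinMap.ext (funext fun y => ?_))
          show op y.1 • (op f • u) = op y.1 • u
          rw [← LMod.mul_smul', ← op_mul, hyf y]
        rw [this]
      have hrange : g ∈ Set.range (muMap R S U) := by
        rw [← him]
        exact AddSubgroup.subset_closure ⟨f, g, hgf.symm⟩
      obtain ⟨s₀, hs₀⟩ := hrange
      refine ⟨⟨f * s₀, s₀, rfl⟩, ?_⟩
      refine Subtype.ext (LinMap.ext (funext fun α => ?_))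
      show α.1.1 ⟨f * s₀, s₀, rfl⟩ = G.1.1 α
      have hα : α = Bd (α.1.1 fb) := Subtype.ext (hbeta α.1)
      conv_rhs => rw [hα]
      show α.1.1 ⟨f * s₀, s₀, rfl⟩ = g.1 (α.1.1 fb)
      rw [← hs₀]
      show α.1.1 ⟨f * s₀, s₀, rfl⟩ = op s₀ • α.1.1 fb
      have hfs : (⟨f * s₀, s₀, rfl⟩ : ↥(principalRight S f)) = op s₀ • fb :=
        Subtype.ext rfl
      rw [hfs]
      exact α.1.2.map_smul (op s₀) fb
end

section
/- Let R and S be rings with local units and let U be a unitary R-S-bimodule. (a) If U has properties (I) and (II), then the contravariant functor Hom_R(−,U)S : RMod → ModS is exact. (b) If U has properties (III) and (IV), then the contravariant functor RHom_S(−,U) : ModS → RMod is exact. -/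
set_option linter.unusedVariables false

/-! ### Core: non-unital rings with local units, modules, homomorphisms, categories -/

universe u v w

open MulOpposite CategoryTheory

/-! ### Auxiliary lemmas for exactness of the dual hom functors -/

section exactaux

theorem umax_exists_unit' {C : Type u} [NonUnitalRing C] [HasLocalUnits C]
    {W : Type v} [AddCommGroup W] [LMod C W]
    {w : W} (hw : w ∈ umax C W) : ∃ e : C, e * e = e ∧ e • w = w := by
  classical
  have h : ∃ t : Finset C, ∀ e : C, (∀ s ∈ t, e * s = s) → e • w = w := by
    induction hw using AddSubgroup.closure_induction with
    | mem x hx =>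
      obtain ⟨c, h', rfl⟩ := hx
      exact ⟨{c}, fun e he => by
        rw [← LMod.mul_smul', he c (Finset.mem_singleton_self c)]⟩
    | zero => exact ⟨∅, fun e _ => LMod.smul_zero' e⟩
    | add x y hx hy ihx ihy =>
      obtain ⟨t1, h1⟩ := ihx
      obtain ⟨t2, h2⟩ := ihy
      exact ⟨t1 ∪ t2, fun e he => by
        rw [LMod.smul_add', h1 e (fun s hs => he s (Finset.mem_union_left _ hs)),
          h2 e (fun s hs => he s (Finset.mem_union_right _ hs))]⟩
    | neg x hx ihx =>
      obtain ⟨t1, h1⟩ := ihx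
      exact ⟨t1, fun e he => by rw [LMod.smul_neg', h1 e he]⟩
  obtain ⟨t, ht⟩ := h
  obtain ⟨e, hee, he⟩ := HasLocalUnits.exists_unit t
  exact ⟨e, hee, ht e (fun s hs => (he s hs).1)⟩

variable {B₀ C : Type u} [NonUnitalRing B₀] [NonUnitalRing C]
variable {U : Type u} [AddCommGroup U] [LMod B₀ U] [LMod C U] [SMulCommClass B₀ C U]

/-- Generic precomposition map on the unitary part of hom groups. -/
def postMap {M N : Type u} [AddCommGroup M] [AddCommGroup N] [LMod B₀ M] [LMod B₀ N]
    (f : LinMap B₀ M N) (α : ↥(umax C (LinMap B₀ N U))) : ↥(umax C (LinMap B₀ M U)) :=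
  ⟨⟨fun x => α.1.1 (f.1 x),
    ⟨fun x y => by rw [f.2.map_add, α.1.2.map_add],
     fun r x => by rw [f.2.map_smul, α.1.2.map_smul]⟩⟩,
   umax_mapsTo (C := C)
     (fun g => ⟨fun x => g.1 (f.1 x),
       ⟨fun x y => by rw [f.2.map_add, g.2.map_add],
        fun r x => by rw [f.2.map_smul, g.2.map_smul]⟩⟩)
     (fun g g' => LinMap.ext rfl) (fun s g => LinMap.ext rfl) α.2⟩

theorem post_exact [HasLocalUnits C]
    (hfact : ∀ e : C, ∃ I : UMod.{u, u} B₀, CategoryTheory.Injective I ∧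
      ∃ (p : LinMap B₀ U I.carrier) (γi : LinMap B₀ I.carrier U),
        ∀ x : U, e • x = γi.1 (p.1 x))
    (A B C' : UMod.{u, u} B₀) (f : A ⟶ B) (g : B ⟶ C')
    (hf : Function.Injective f.1) (hg : Function.Surjective g.1)
    (hker : ∀ b : B.carrier, g.1 b = 0 ↔ ∃ a : A.carrier, f.1 a = b) :
    Function.Injective (postMap (C := C) (U := U) g) ∧
    Function.Surjective (postMap (C := C) (U := U) f) ∧
    (∀ β : ↥(umax C (LinMap B₀ B.carrier U)),
      postMap (C := C) (U := U) f β = 0 ↔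
        ∃ γ : ↥(umax C (LinMap B₀ C'.carrier U)), postMap (C := C) (U := U) g γ = β) := by
  -- g ∘ f = 0
  have hgf : ∀ a : A.carrier, g.1 (f.1 a) = 0 := fun a => (hker (f.1 a)).mpr ⟨a, rfl⟩
  -- f is a monomorphism in the category
  haveI hmono : CategoryTheory.Mono f :=
    ⟨fun u v huv => LinMap.ext (funext fun x =>
      hf (congrFun (congrArg Subtype.val huv) x))⟩
  refine ⟨?_, ?_, ?_⟩
  · -- injectivity of (− ∘ g)
    intro α β h
    refine Subtype.ext (LinMap.ext (funext fun c => ?_))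
    obtain ⟨b, rfl⟩ := hg c
    exact congrFun (congrArg (fun t => t.1.1) h) b
  · -- surjectivity of (− ∘ f)
    intro β
    obtain ⟨e, hee, heβ⟩ := umax_exists_unit' β.2
    have heβ' : ∀ a : A.carrier, e • β.1.1 a = β.1.1 a := fun a =>
      congrFun (congrArg Subtype.val heβ) a
    obtain ⟨I, hInj, p, γi, hfac⟩ := hfact e
    haveI := hInj
    -- h : A ⟶ I
    let h : A ⟶ I := ⟨fun a => p.1 (β.1.1 a),
      ⟨fun x y => by rw [β.1.2.map_add, p.2.map_add],
       fun r x => by rw [β.1.2.map_smul, p.2.map_smul]⟩⟩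
    let h' : B ⟶ I := CategoryTheory.Injective.factorThru h f
    have hcomm : ∀ a : A.carrier, h'.1 (f.1 a) = h.1 a := fun a =>
      congrFun (congrArg Subtype.val (CategoryTheory.Injective.comp_factorThru h f)) a
    let δ₀ : LinMap B₀ B.carrier U := ⟨fun b => γi.1 (h'.1 b),
      ⟨fun x y => by rw [h'.2.map_add, γi.2.map_add],
       fun r x => by rw [h'.2.map_smul, γi.2.map_smul]⟩⟩
    refine ⟨⟨e • δ₀, smul_mem_umax e δ₀⟩, Subtype.ext (LinMap.ext (funext fun a => ?_))⟩
    show e • γi.1 (h'.1 (f.1 a)) = β.1.1 a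
    rw [hcomm a]
    show e • γi.1 (p.1 (β.1.1 a)) = β.1.1 a
    rw [← hfac (β.1.1 a), ← LMod.mul_smul', hee, heβ' a]
  · -- exactness at B
    intro β
    constructor
    · intro h0
      have h0' : ∀ a : A.carrier, β.1.1 (f.1 a) = 0 := fun a =>
        congrFun (congrArg (fun t => t.1.1) h0) a
      -- β is constant on fibers of g
      have wd : ∀ b b' : B.carrier, g.1 b = g.1 b' → β.1.1 b = β.1.1 b' := by
        intro b b' hbb'
        have hz : g.1 (b + -b') = 0 := by
          rw [g.2.map_add, g.2.map_neg, hbb', add_neg_cancel]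
        obtain ⟨a, ha⟩ := (hker _).mp hz
        have : β.1.1 (b + -b') = 0 := by rw [← ha]; exact h0' a
        rw [β.1.2.map_add, β.1.2.map_neg] at this
        exact add_neg_eq_zero.mp this
      obtain ⟨sec, hsec⟩ := Classical.axiomOfChoice hg
      let γ₀ : C'.carrier → U := fun c => β.1.1 (sec c)
      have γadd : ∀ c c', γ₀ (c + c') = γ₀ c + γ₀ c' := by
        intro c c'
        have : γ₀ (c + c') = β.1.1 (sec c + sec c') := by
          refine wd _ _ ?_
          rw [hsec, g.2.map_add, hsec, hsec]
        rw [this, β.1.2.map_add]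
      have γsmul : ∀ (r : B₀) (c : C'.carrier), γ₀ (r • c) = r • γ₀ c := by
        intro r c
        have : γ₀ (r • c) = β.1.1 (r • sec c) := by
          refine wd _ _ ?_
          rw [hsec, g.2.map_smul, hsec]
        rw [this, β.1.2.map_smul]
      let γlin : LinMap B₀ C'.carrier U := ⟨γ₀, ⟨γadd, γsmul⟩⟩
      obtain ⟨e, hee, heβ⟩ := umax_exists_unit' β.2
      have heβ' : ∀ b : B.carrier, e • β.1.1 b = β.1.1 b := fun b =>
        congrFun (congrArg Subtype.val heβ) b
      refine ⟨⟨e • γlin, smul_mem_umax e γlin⟩, Subtype.ext (LinMap.ext (funext fun b => ?_))⟩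
      show e • β.1.1 (sec (g.1 b)) = β.1.1 b
      rw [wd (sec (g.1 b)) b (hsec (g.1 b)), heβ' b]
    · rintro ⟨γ, rfl⟩
      refine Subtype.ext (LinMap.ext (funext fun a => ?_))
      show γ.1.1 (g.1 (f.1 a)) = (0 : U)
      rw [hgf a, γ.1.2.map_zero]

end exactaux

/-! ## STATEMENT 16
(a) If `U` has properties (I) and (II), then `Hom_R(−,U)S` is exact;
(b) if `U` has properties (III) and (IV), then `RHom_S(−,U)` is exact. -/
theorem dual_hom_functors_exact
    (R S : Type u) [NonUnitalRing R] [NonUnitalRing S]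
    [HasLocalUnits R] [HasLocalUnits S]
    (U : Type u) [AddCommGroup U] [LMod R U] [LMod Sᵐᵒᵖ U]
    [SMulCommClass R Sᵐᵒᵖ U] [SMulCommClass Sᵐᵒᵖ R U] :
    -- (a):
    (SatisfiesI_II R S U →
      ∀ (A B C : UMod.{u, u} R) (f : A ⟶ B) (g : B ⟶ C),
        Function.Injective f.1 → Function.Surjective g.1 →
        (∀ b : B.carrier, g.1 b = 0 ↔ ∃ a : A.carrier, f.1 a = b) →
        (Function.Injective (dHomLMap (S := S) (U := U) g) ∧
         Function.Surjective (dHomLMap (S := S) (U := U) f) ∧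
         (∀ β : DHomL R S U B.carrier,
           dHomLMap (S := S) (U := U) f β = 0 ↔
             ∃ γ : DHomL R S U C.carrier, dHomLMap (S := S) (U := U) g γ = β))) ∧
    -- (b):
    (SatisfiesIII_IV R S U →
      ∀ (A B C : UMod.{u, u} Sᵐᵒᵖ) (f : A ⟶ B) (g : B ⟶ C),
        Function.Injective f.1 → Function.Surjective g.1 →
        (∀ b : B.carrier, g.1 b = 0 ↔ ∃ a : A.carrier, f.1 a = b) →
        (Function.Injective (dHomRMap (R := R) (U := U) g) ∧
         Function.Surjective (dHomRMap (R := R) (U := U) f) ∧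
         (∀ β : DHomR R S U B.carrier,
           dHomRMap (R := R) (U := U) f β = 0 ↔
             ∃ γ : DHomR R S U C.carrier, dHomRMap (R := R) (U := U) g γ = β))) := by
  constructor
  · -- part (a)
    intro hI A B C f g hf hg hker
    have hfact : ∀ e : Sᵐᵒᵖ, ∃ I : UMod.{u, u} R, CategoryTheory.Injective I ∧
        ∃ (p : LinMap R U I.carrier) (γi : LinMap R I.carrier U),
          ∀ x : U, e • x = γi.1 (p.1 x) := by
      intro e
      obtain ⟨ι, rel, hrefl, htrans, hne, hdir, D, c, proj, hinjfg, hcog, hpi, hps,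
        hmu, hrange⟩ := hI
      have hmem : muMap R S U e.unop ∈ Set.range (muMap R S U) := ⟨e.unop, rfl⟩
      rw [hrange] at hmem
      obtain ⟨i, γ, hγ⟩ := hmem
      refine ⟨D.obj i, (hinjfg i).2, proj i, γ, fun x => ?_⟩
      have : (muMap R S U e.unop).1 x = γ.1 ((proj i).1 x) := congrFun hγ x
      rw [← this]
      show e • x = op e.unop • x
      rw [op_unop]
    exact post_exact (B₀ := R) (C := Sᵐᵒᵖ) (U := U) hfact A B C f g hf hg hker
  · -- part (b)
    intro hIII A B C f g hf hg hker
    have hfact : ∀ e : R, ∃ I : UMod.{u, u} Sᵐᵒᵖ, CategoryTheory.Injective I ∧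
        ∃ (p : LinMap Sᵐᵒᵖ U I.carrier) (γi : LinMap Sᵐᵒᵖ I.carrier U),
          ∀ x : U, e • x = γi.1 (p.1 x) := by
      intro e
      obtain ⟨ι, rel, hrefl, htrans, hne, hdir, D, c, proj, hinjfg, hcog, hpi, hps,
        hla, hrange⟩ := hIII
      have hmem : lambdaMap R S U e ∈ Set.range (lambdaMap R S U) := ⟨e, rfl⟩
      rw [hrange] at hmem
      obtain ⟨i, γ, hγ⟩ := hmem
      exact ⟨D.obj i, (hinjfg i).2, proj i, γ, fun x => congrFun hγ x⟩
    exact post_exact (B₀ := Sᵐᵒᵖ) (C := R) (U := U) hfact A B C f g hf hg hker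
end
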